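/- Let f : ℝ → ℝ be monotone nondecreasing with f(0) = 0, let g : [-1,1] → ℝ be continuous, and let h : [-1,1] → ℝ be four times continuously differentiable with h(-1) = h(1) = 0 and h'(-1) = h'(1) = 0 (clamped boundary conditions), satisfying the beam equation h''''(y) + f(h(y)) = g(y) for all y ∈ [-1,1]. Then (∫_{-1}^{1} h''(y)² dy)^{1/2} ≤ √2 · sup_{y ∈ [-1,1]} |g(y)|. -/

import Mathlib

open intervalIntegral Set MeasureTheory

lemma cs_int (a b : ℝ) (hab : a ≤ b) (u v : ℝ → ℝ)
    (hu : Continuous u) (hv : Continuous v) :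
    (∫ t in a..b, u t * v t) ^ 2 ≤ (∫ t in a..b, u t ^ 2) * (∫ t in a..b, v t ^ 2) := by
  set I := ∫ t in a..b, u t ^ 2 with hI
  set J := ∫ t in a..b, u t * v t with hJ
  set K := ∫ t in a..b, v t ^ 2 with hK
  have iu2 : IntervalIntegrable (fun t => u t ^ 2) volume a b := ((hu.pow 2).intervalIntegrable a b)
  have iv2 : IntervalIntegrable (fun t => v t ^ 2) volume a b := ((hv.pow 2).intervalIntegrable a b)
  have iuv : IntervalIntegrable (fun t => u t * v t) volume a b := ((hu.mul hv).intervalIntegrable a b)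
  have expand : ∀ x : ℝ, 0 ≤ I * (x * x) + (2 * J) * x + K := by
    intro x
    have e : ∀ t, x * x * u t ^ 2 + 2 * x * (u t * v t) + v t ^ 2 = (x * u t + v t) ^ 2 := by
      intro t; ring
    have nn : 0 ≤ ∫ t in a..b, (x * u t + v t) ^ 2 :=
      intervalIntegral.integral_nonneg hab (fun t _ => sq_nonneg _)
    have : (∫ t in a..b, (x * u t + v t) ^ 2)
        = x * x * I + 2 * x * J + K := by
      rw [show (∫ t in a..b, (x * u t + v t) ^ 2)
          = ∫ t in a..b, (x * x * u t ^ 2 + 2 * x * (u t * v t) + v t ^ 2) from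
        intervalIntegral.integral_congr fun t _ => (e t).symm,
        intervalIntegral.integral_add ((iu2.const_mul _).add (iuv.const_mul _)) iv2,
        intervalIntegral.integral_add (iu2.const_mul _) (iuv.const_mul _),
        intervalIntegral.integral_const_mul, intervalIntegral.integral_const_mul]
    nlinarith [nn, this]
  have hd := discrim_le_zero expand
  rw [discrim] at hd
  nlinarith [hd]

section aux

variable (h : ℝ → ℝ) (hreg : ContDiff ℝ 4 h)

lemma aux_facts (hreg : ContDiff ℝ 4 h) :
    Continuous h ∧ Continuous (deriv h) ∧ Continuous (deriv (deriv h)) ∧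
    Continuous (deriv (deriv (deriv h))) ∧ Continuous (deriv (deriv (deriv (deriv h)))) := by
  have c1 : ContDiff ℝ 3 (deriv h) := by simpa using hreg.iterate_deriv' 3 1
  have c2 : ContDiff ℝ 2 (deriv (deriv h)) := by
    simpa [Function.iterate_succ_apply'] using hreg.iterate_deriv' 2 2
  have c3 : ContDiff ℝ 1 (deriv (deriv (deriv h))) := by
    simpa [Function.iterate_succ_apply'] using hreg.iterate_deriv' 1 3
  have c4 : Continuous (deriv (deriv (deriv (deriv h)))) := by
    have := (hreg.iterate_deriv' 0 4).continuous
    simpa [Function.iterate_succ_apply'] using this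
  exact ⟨hreg.continuous, c1.continuous, c2.continuous, c3.continuous, c4⟩

lemma aux_diff (hreg : ContDiff ℝ 4 h) :
    (∀ x : ℝ, HasDerivAt h (deriv h x) x) ∧
    (∀ x : ℝ, HasDerivAt (deriv h) (deriv (deriv h) x) x) ∧
    (∀ x : ℝ, HasDerivAt (deriv (deriv h)) (deriv (deriv (deriv h)) x) x) ∧
    (∀ x : ℝ, HasDerivAt (deriv (deriv (deriv h))) (deriv (deriv (deriv (deriv h))) x) x) := by
  have c1 : ContDiff ℝ 3 (deriv h) := by simpa using hreg.iterate_deriv' 3 1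
  have c2 : ContDiff ℝ 2 (deriv (deriv h)) := by
    simpa [Function.iterate_succ_apply'] using hreg.iterate_deriv' 2 2
  have c3 : ContDiff ℝ 1 (deriv (deriv (deriv h))) := by
    simpa [Function.iterate_succ_apply'] using hreg.iterate_deriv' 1 3
  exact ⟨fun x => ((hreg.differentiable (by norm_num)) x).hasDerivAt,
    fun x => ((c1.differentiable (by norm_num)) x).hasDerivAt,
    fun x => ((c2.differentiable (by norm_num)) x).hasDerivAt,
    fun x => ((c3.differentiable (by norm_num)) x).hasDerivAt⟩

end aux

lemma rep_formula (h : ℝ → ℝ) (hreg : ContDiff ℝ 4 h) (a : ℝ) (ha : h a = 0)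
    (ha' : deriv h a = 0) (y : ℝ) :
    h y = ∫ t in a..y, (y - t) * deriv (deriv h) t := by
  obtain ⟨ch, c1, c2, c3, c4⟩ := aux_facts h hreg
  obtain ⟨d0, d1, d2, d3⟩ := aux_diff h hreg
  have hu : ∀ x ∈ uIcc a y, HasDerivAt (fun t => y - t) ((fun _ : ℝ => (-1 : ℝ)) x) x :=
    fun x _ => (hasDerivAt_id x).const_sub y
  have hv : ∀ x ∈ uIcc a y, HasDerivAt (deriv h) (deriv (deriv h) x) x := fun x _ => d1 x
  have ibp := intervalIntegral.integral_mul_deriv_eq_deriv_mul hu hv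
    (intervalIntegrable_const) (c2.intervalIntegrable a y)
  have ftc : ∫ t in a..y, deriv h t = h y - h a :=
    intervalIntegral.integral_deriv_eq_sub (fun x _ => (d0 x).differentiableAt) (c1.intervalIntegrable a y)
  rw [show (∫ t in a..y, (fun _ : ℝ => (-1:ℝ)) t * deriv h t) = -∫ t in a..y, deriv h t by
      simp [intervalIntegral.integral_neg], ftc] at ibp
  rw [ibp, ha, ha']
  ring

lemma poly_int (y c : ℝ) : ∫ t in c..y, (y - t) ^ 2 = (y - c) ^ 3 / 3 := by
  have key : ∀ t ∈ uIcc c y, HasDerivAt (fun t => -((y - t) ^ 3 / 3)) ((y - t) ^ 2) t := by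
    intro t _
    have h1 : HasDerivAt (fun t => y - t) (-1 : ℝ) t := (hasDerivAt_id t).const_sub y
    have h3 : HasDerivAt (fun t => -((y - t) ^ 3 / 3)) (-((3:ℕ) * (y - t) ^ (3 - 1) * -1 / 3)) t :=
      ((h1.pow 3).div_const 3).neg
    convert h3 using 1
    ring
  have := intervalIntegral.integral_eq_sub_of_hasDerivAt key
    (((continuous_const.sub continuous_id).pow 2).intervalIntegrable c y)
  rw [this]; ring

lemma ibp_twice (h : ℝ → ℝ) (hreg : ContDiff ℝ 4 h)
    (hb1 : h (-1) = 0) (hb2 : h 1 = 0)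
    (hb3 : deriv h (-1) = 0) (hb4 : deriv h 1 = 0) :
    ∫ x in (-1:ℝ)..1, h x * deriv (deriv (deriv (deriv h))) x
      = ∫ x in (-1:ℝ)..1, (deriv (deriv h) x) ^ 2 := by
  obtain ⟨ch, c1, c2, c3, c4⟩ := aux_facts h hreg
  obtain ⟨d0, d1, d2, d3⟩ := aux_diff h hreg
  have ibp1 := intervalIntegral.integral_mul_deriv_eq_deriv_mul
    (u := h) (v := deriv (deriv (deriv h))) (fun x _ => d0 x) (fun x _ => d3 x)
    (c1.intervalIntegrable (-1) 1) (c4.intervalIntegrable (-1) 1)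
  have ibp2 := intervalIntegral.integral_mul_deriv_eq_deriv_mul
    (u := deriv h) (v := deriv (deriv h)) (fun x _ => d1 x) (fun x _ => d2 x)
    (c2.intervalIntegrable (-1) 1) (c3.intervalIntegrable (-1) 1)
  rw [hb1, hb2] at ibp1
  rw [hb3, hb4] at ibp2
  rw [ibp1, ibp2]
  have : (∫ x in (-1:ℝ)..1, deriv (deriv h) x * deriv (deriv h) x)
      = ∫ x in (-1:ℝ)..1, (deriv (deriv h) x) ^ 2 :=
    intervalIntegral.integral_congr fun x _ => (sq (deriv (deriv h) x)).symm
  rw [this]; ring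

theorem stmt_12 (f : ℝ → ℝ) (hf : Monotone f) (hf0 : f 0 = 0)
    (g : ℝ → ℝ) (hg : ContinuousOn g (Set.Icc (-1 : ℝ) 1))
    (h : ℝ → ℝ) (hreg : ContDiff ℝ 4 h)
    (hb1 : h (-1) = 0) (hb2 : h 1 = 0)
    (hb3 : deriv h (-1) = 0) (hb4 : deriv h 1 = 0)
    (heq : ∀ y ∈ Set.Icc (-1 : ℝ) 1,
      deriv (deriv (deriv (deriv h))) y + f (h y) = g y) :
    Real.sqrt (∫ y in (-1 : ℝ)..1, (deriv (deriv h) y) ^ 2)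
      ≤ Real.sqrt 2 * sSup ((fun y => |g y|) '' Set.Icc (-1 : ℝ) 1) := by
  obtain ⟨ch, c1, c2, c3, c4⟩ := aux_facts h hreg
  set A := ∫ y in (-1:ℝ)..1, (deriv (deriv h) y) ^ 2 with hA
  set M := sSup ((fun y => |g y|) '' Set.Icc (-1:ℝ) 1) with hM
  have hAnn : 0 ≤ A :=
    intervalIntegral.integral_nonneg (by norm_num) (fun t _ => sq_nonneg _)
  have hbdd : BddAbove ((fun y => |g y|) '' Set.Icc (-1:ℝ) 1) :=
    (isCompact_Icc.image_of_continuousOn hg.abs).bddAbove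
  have hMle : ∀ y ∈ Set.Icc (-1:ℝ) 1, |g y| ≤ M := fun y hy => le_csSup hbdd ⟨y, hy, rfl⟩
  have hMnn : 0 ≤ M := le_trans (abs_nonneg _) (hMle (-1) (by norm_num))
  -- pointwise bound |h y| ≤ √(A/3)
  have hpt : ∀ y ∈ Set.Icc (-1:ℝ) 1, |h y| ≤ Real.sqrt (A/3) := by
    intro y hy
    have key : h y ^ 2 ≤ A / 3 := by
      rcases le_total y 0 with hy0 | hy0
      · have hrep := rep_formula h hreg (-1) hb1 hb3 y
        have hy1 : (-1:ℝ) ≤ y := hy.1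
        have hcs := cs_int (-1) y hy1 (fun t => y - t) (deriv (deriv h))
          (continuous_const.sub continuous_id) c2
        rw [← hrep] at hcs
        have hp : (∫ t in (-1:ℝ)..y, (y - t) ^ 2) = (y+1)^3/3 := by
          rw [poly_int]; ring
        have hsub : (∫ t in (-1:ℝ)..y, (deriv (deriv h) t) ^ 2) ≤ A :=
          intervalIntegral.integral_mono_interval le_rfl hy1 hy.2
            (Filter.Eventually.of_forall fun t => sq_nonneg _)
            ((c2.pow 2).intervalIntegrable _ _)
        have hsubnn : 0 ≤ ∫ t in (-1:ℝ)..y, (deriv (deriv h) t) ^ 2 :=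
          intervalIntegral.integral_nonneg hy1 fun t _ => sq_nonneg _
        have hple : (y+1)^3/3 ≤ 1/3 := by
          have := pow_le_one₀ (show (0:ℝ) ≤ y+1 by linarith) (show y+1 ≤ 1 by linarith) (n := 3)
          linarith
        have hpnn : (0:ℝ) ≤ (y+1)^3/3 := by
          have := pow_nonneg (show (0:ℝ) ≤ y+1 by linarith) 3
          linarith
        nlinarith [hcs, hsub, hsubnn, hp]
      · have hrep := rep_formula h hreg 1 hb2 hb4 y
        have hy1 : y ≤ (1:ℝ) := hy.2
        rw [intervalIntegral.integral_symm] at hrep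
        have hflip : (∫ t in y..1, (t - y) * deriv (deriv h) t)
            = -∫ t in y..1, (y - t) * deriv (deriv h) t := by
          rw [← intervalIntegral.integral_neg]
          exact intervalIntegral.integral_congr fun t _ => by ring
        have hrep2 : h y = ∫ t in y..1, (t - y) * deriv (deriv h) t := by
          rw [hflip, ← hrep]
        have hcs := cs_int y 1 hy1 (fun t => t - y) (deriv (deriv h))
          (continuous_id.sub continuous_const) c2
        rw [← hrep2] at hcs
        have hp : (∫ t in y..1, (t - y) ^ 2) = (1-y)^3/3 := by
          have e1 : (∫ t in y..1, (t - y) ^ 2) = ∫ t in y..1, (y - t) ^ 2 :=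
            intervalIntegral.integral_congr fun t _ => by ring
          rw [e1, intervalIntegral.integral_symm, poly_int]; ring
        have hsub : (∫ t in y..1, (deriv (deriv h) t) ^ 2) ≤ A :=
          intervalIntegral.integral_mono_interval hy.1 hy1 le_rfl
            (Filter.Eventually.of_forall fun t => sq_nonneg _)
            ((c2.pow 2).intervalIntegrable _ _)
        have hsubnn : 0 ≤ ∫ t in y..1, (deriv (deriv h) t) ^ 2 :=
          intervalIntegral.integral_nonneg hy1 fun t _ => sq_nonneg _
        have hple : (1-y)^3/3 ≤ 1/3 := by
          have := pow_le_one₀ (show (0:ℝ) ≤ 1-y by linarith) (show 1-y ≤ 1 by linarith [hy.1]) (n := 3)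
          linarith
        have hpnn : (0:ℝ) ≤ (1-y)^3/3 := by
          have := pow_nonneg (show (0:ℝ) ≤ 1-y by linarith) 3
          linarith
        nlinarith [hcs, hsub, hsubnn, hp]
    calc |h y| = Real.sqrt (h y ^ 2) := (Real.sqrt_sq_eq_abs _).symm
      _ ≤ Real.sqrt (A/3) := Real.sqrt_le_sqrt key
  -- ∫ |h| ≤ 2 √(A/3)
  have hint_abs : (∫ y in (-1:ℝ)..1, |h y|) ≤ 2 * Real.sqrt (A/3) := by
    have := intervalIntegral.integral_mono_on (by norm_num : (-1:ℝ) ≤ 1)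
      ((ch.abs).intervalIntegrable _ _) (intervalIntegrable_const (μ := MeasureTheory.volume)) hpt
    rw [intervalIntegral.integral_const, smul_eq_mul] at this
    calc (∫ y in (-1:ℝ)..1, |h y|) ≤ (1 - (-1)) * Real.sqrt (A/3) := this
      _ = 2 * Real.sqrt (A/3) := by norm_num
  -- main energy estimate
  have hA_le : A ≤ M * (2 * Real.sqrt (A/3)) := by
    have hAeq : A = ∫ x in (-1:ℝ)..1, h x * deriv (deriv (deriv (deriv h))) x :=
      (ibp_twice h hreg hb1 hb2 hb3 hb4).symm
    have hpoint : ∀ y ∈ Set.Icc (-1:ℝ) 1,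
        h y * deriv (deriv (deriv (deriv h))) y ≤ M * |h y| := by
      intro y hy
      have e := heq y hy
      have e' : deriv (deriv (deriv (deriv h))) y = g y - f (h y) := by linarith
      have hfh : 0 ≤ f (h y) * h y := by
        rcases le_total 0 (h y) with hs | hs
        · exact mul_nonneg (hf0 ▸ hf hs) hs
        · exact mul_nonneg_of_nonpos_of_nonpos (hf0 ▸ hf hs) hs
      calc h y * deriv (deriv (deriv (deriv h))) y
          = g y * h y - f (h y) * h y := by rw [e']; ring
        _ ≤ g y * h y := by linarith
        _ ≤ |g y * h y| := le_abs_self _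
        _ = |g y| * |h y| := abs_mul _ _
        _ ≤ M * |h y| := mul_le_mul_of_nonneg_right (hMle y hy) (abs_nonneg _)
    calc A = ∫ x in (-1:ℝ)..1, h x * deriv (deriv (deriv (deriv h))) x := hAeq
      _ ≤ ∫ y in (-1:ℝ)..1, M * |h y| :=
          intervalIntegral.integral_mono_on (by norm_num)
            ((ch.mul c4).intervalIntegrable _ _)
            ((continuous_const.mul ch.abs).intervalIntegrable _ _) hpoint
      _ = M * ∫ y in (-1:ℝ)..1, |h y| := intervalIntegral.integral_const_mul _ _
      _ ≤ M * (2 * Real.sqrt (A/3)) := mul_le_mul_of_nonneg_left hint_abs hMnn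
  -- conclude
  set t := Real.sqrt (A/3) with htdef
  have htnn : 0 ≤ t := Real.sqrt_nonneg _
  have ht : t ^ 2 = A / 3 := Real.sq_sqrt (by positivity)
  have hA2M : A ≤ 2 * M ^ 2 := by nlinarith [hA_le, sq_nonneg (2*M - 3*t), ht, htnn, hMnn]
  calc Real.sqrt A ≤ Real.sqrt (2 * M ^ 2) := Real.sqrt_le_sqrt hA2M
    _ = Real.sqrt 2 * M := by
        rw [Real.sqrt_mul (by norm_num), Real.sqrt_sq hMnn]
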